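/- For every integer n, every rooted tree T, and every vertex u of T at generation n, one has P(𝕋_n = T_n, ξ_n = u) = (∂M_n(T_n) / Z_n(T_n)) · GW(𝒯_n = T_n), where T_n denotes T truncated at generation n, Z_n(T_n) is the number of vertices of T at generation n, and ∂M_n(T_n) := e^{1/c_n} (Z_n(T_n)/φ'_n(φ_n^{−1}(s))) · φ_n^{−1}(s)^{Z_n(T_n)}. -/

import Mathlib

open MeasureTheory Filter Set

noncomputable section

/-- A configuration assigns to each Ulam–Harris label (a finite word on `ℕ`)
a number of children. A Galton–Watson tree is encoded by such a configuration. -/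
abbrev Config : Type := List ℕ → ℕ

/-- `v` is a vertex of the tree encoded by the configuration `ω`:
every step of the path from the root is the index of a child of the previous vertex. -/
def memTree (ω : Config) (v : List ℕ) : Prop :=
  ∀ k, (h : k < v.length) → v.get ⟨k, h⟩ < ω (v.take k)

/-- `Z ω u k` is the number of descendants of the vertex `u` at height `|u| + k`
in the tree encoded by `ω`. -/
def Z (ω : Config) (u : List ℕ) (k : ℕ) : ℕ :=
  Nat.card {v : List ℕ // v.length = k ∧ memTree ω (u ++ v)}

/-- `GW` is the law of the Galton–Watson tree with offspring distribution `q`: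
under `GW` the numbers of children attached to the distinct labels
are i.i.d. with distribution `q`. -/
def IsGW (q : ℕ → ℝ) (GW : Measure Config) : Prop :=
  IsProbabilityMeasure GW ∧
    ∀ (S : Finset (List ℕ)) (g : List ℕ → ℕ),
      GW {ω | ∀ u ∈ S, ω u = g u} = ∏ u ∈ S, ENNReal.ofReal (q (g u))

/-- The probability generating function `φ_n(x) = E[x^{Z_n}]` of the population
at height `n` under the measure `GW`. -/
def pgf (GW : Measure Config) (n : ℕ) (x : ℝ) : ℝ :=
  ∫ ω, x ^ (Z ω [] n) ∂GW

/-- The vertex at height `n` of the ray whose successive child choices are given by `ξ`. -/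
def rayVertex (ξ : ℕ → ℕ) (n : ℕ) : List ℕ := List.ofFn (fun i : Fin n => ξ i)

/-- The generation at height `k` of the tree encoded by `t`. -/
def genSet (t : Config) (k : ℕ) : Set (List ℕ) := {v | v.length = k ∧ memTree t v}

/-- The offspring distribution `q̃_ℓ = q_ℓ e^{1/c_k} e^{-ℓ/c_{k+1}}` of a vertex of
generation `k` off the spine. -/
def tq (q : ℕ → ℝ) (c : ℕ → ℝ) (k ℓ : ℕ) : ℝ :=
  q ℓ * Real.exp (1 / c k) * Real.exp (-(ℓ : ℝ) / c (k + 1))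

/-- The offspring distribution
`q̃^s_ℓ = q_ℓ ℓ e^{-(ℓ-1)/c_{k+1}} φ'_k(φ_k^{-1}(s)) / φ'_{k+1}(φ_{k+1}^{-1}(s))`
of the spine vertex `ξ_k` at generation `k`. -/
def tqs (q : ℕ → ℝ) (c : ℕ → ℝ) (GW : Measure Config) (φinv : ℕ → ℝ → ℝ) (s : ℝ)
    (k ℓ : ℕ) : ℝ :=
  q ℓ * (ℓ : ℝ) * Real.exp (-((ℓ : ℝ) - 1) / c (k + 1)) *
    (deriv (pgf GW k) (φinv k s) / deriv (pgf GW (k + 1)) (φinv (k + 1) s))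

/-- `P` is the law of the marked tree `(𝕋, ξ)` of the spine construction:
conditionally on the first `k` generations `𝕋_k` and on the spine vertex `ξ_k`, the
numbers of children of the vertices at generation `k` are independent, the spine vertex
`ξ_k` having `ℓ` children with probability `tqs k ℓ`, every other vertex of generation `k`
having `ℓ` children with probability `tq k ℓ`, and `ξ_{k+1}` is chosen uniformly among the
children of `ξ_k`.  Equivalently, the probability that the tree agrees with `t` up to
generation `n` and that the spine makes the choices `u 0, …, u (n-1)` is the product below. -/
def IsSpineLaw (tq' tqs' : ℕ → ℕ → ℝ) (P : Measure (Config × (ℕ → ℕ))) : Prop :=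
  IsProbabilityMeasure P ∧
    ∀ (n : ℕ) (t : Config) (u : ℕ → ℕ), (∀ k < n, u k < t (rayVertex u k)) →
      P {p | (∀ v : List ℕ, v.length < n → memTree t v → p.1 v = t v) ∧
             (∀ k < n, p.2 k = u k)}
        = ∏ k ∈ Finset.range n,
            ENNReal.ofReal ((tqs' k (t (rayVertex u k)) / (t (rayVertex u k)))
              * ∏ᶠ v ∈ (genSet t k \ {rayVertex u k}), tq' k (t v))

namespace SpineAux

lemma memTree_nil (t : Config) : memTree t [] := fun k h => absurd h (Nat.not_lt_zero k)

lemma memTree_concat {t : Config} {v : List ℕ} {j : ℕ} :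
    memTree t (v ++ [j]) ↔ memTree t v ∧ j < t v := by
  constructor
  · intro h
    constructor
    · intro k hk
      have hk' : k < (v ++ [j]).length := by simp; omega
      have := h k hk'
      simpa [List.get_eq_getElem, List.getElem_append_left hk,
        List.take_append_of_le_length hk.le] using this
    · have hk' : v.length < (v ++ [j]).length := by simp
      have := h v.length hk'
      simpa [List.get_eq_getElem, List.take_append_of_le_length le_rfl] using this
  · rintro ⟨h1, h2⟩ k hk
    rcases Nat.lt_or_ge k v.length with hkv | hkv
    · simpa [List.get_eq_getElem, List.getElem_append_left hkv,
        List.take_append_of_le_length hkv.le] using h1 k hkv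
    · have hk2 : k = v.length := by simp at hk; omega
      subst hk2
      simpa [List.get_eq_getElem, List.take_append_of_le_length le_rfl] using h2

def genFinset (t : Config) : ℕ → Finset (List ℕ)
  | 0 => {[]}
  | k+1 => (genFinset t k).biUnion (fun v => (Finset.range (t v)).image (fun j => v ++ [j]))

lemma mem_genFinset {t : Config} {k : ℕ} {v : List ℕ} :
    v ∈ genFinset t k ↔ v.length = k ∧ memTree t v := by
  induction k generalizing v with
  | zero =>
    simp only [genFinset, Finset.mem_singleton]
    constructor
    · rintro rfl; exact ⟨rfl, memTree_nil t⟩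
    · rintro ⟨h, -⟩; exact List.length_eq_zero_iff.mp h
  | succ k ih =>
    simp only [genFinset, Finset.mem_biUnion, Finset.mem_image, Finset.mem_range]
    constructor
    · rintro ⟨w, hw, j, hj, rfl⟩
      obtain ⟨hwlen, hwmem⟩ := ih.mp hw
      exact ⟨by simp [hwlen], memTree_concat.mpr ⟨hwmem, hj⟩⟩
    · rintro ⟨hlen, hmem⟩
      rcases List.eq_nil_or_concat v with rfl | ⟨w, j, rfl⟩
      · simp at hlen
      · rw [List.concat_eq_append] at hmem hlen ⊢
        obtain ⟨h1, h2⟩ := memTree_concat.mp hmem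
        have hwlen : w.length = k := by simp at hlen; omega
        exact ⟨w, ih.mpr ⟨hwlen, h1⟩, j, h2, rfl⟩

lemma genSet_eq (t : Config) (k : ℕ) : genSet t k = ↑(genFinset t k) := by
  ext v; simp [genSet, mem_genFinset]

lemma Z_eq_card (t : Config) (k : ℕ) : Z t [] k = (genFinset t k).card := by
  have : {v : List ℕ // v.length = k ∧ memTree t ([] ++ v)}
      = {v : List ℕ // v ∈ genSet t k} := by
    simp [genSet, Set.mem_setOf_eq]
  rw [Z, this]
  rw [genSet_eq]
  simp [Nat.card_eq_fintype_card]

lemma card_genFinset_succ (t : Config) (k : ℕ) :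
    (genFinset t (k+1)).card = ∑ v ∈ genFinset t k, t v := by
  rw [show genFinset t (k+1)
      = (genFinset t k).biUnion (fun v => (Finset.range (t v)).image (fun j => v ++ [j])) from rfl]
  rw [Finset.card_biUnion]
  · refine Finset.sum_congr rfl fun v _ => ?_
    rw [Finset.card_image_of_injective _ (fun a b h => by simpa using h), Finset.card_range]
  · intro v hv w hw hvw
    simp only [Finset.disjoint_left, Finset.mem_image, Finset.mem_range]
    rintro x ⟨j, hj, rfl⟩ ⟨j', hj', hx⟩
    have hlen : v.length = w.length := by
      rw [(mem_genFinset.mp hv).1, (mem_genFinset.mp hw).1]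
    exact hvw (List.append_inj_left hx.symm hlen)




lemma rayVertex_eq_take {u : List ℕ} {k : ℕ} (hk : k ≤ u.length) :
    rayVertex (fun i => u.getD i 0) k = u.take k := by
  apply List.ext_getElem
  · simp [rayVertex]; omega
  · intro i h1 h2
    simp only [rayVertex, List.length_ofFn] at h1
    simp only [rayVertex]
    rw [List.getElem_ofFn, List.getElem_take]
    exact List.getD_eq_getElem u 0 (lt_of_lt_of_le h1 hk)

lemma rayVertex_eq_iff {ξ : ℕ → ℕ} {u : List ℕ} {n : ℕ} (hu : u.length = n) :
    rayVertex ξ n = u ↔ ∀ k < n, ξ k = u.getD k 0 := by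
  constructor
  · intro h k hk
    have : (rayVertex ξ n)[k]'(by simp [rayVertex]; omega) = u[k]'(by omega) := by
      simp [h]
    simp only [rayVertex] at this
    rw [List.getElem_ofFn] at this
    rw [this, List.getD_eq_getElem u 0 (by omega)]
  · intro h
    apply List.ext_getElem (by simp [rayVertex, hu])
    intro i h1 h2
    simp only [rayVertex, List.length_ofFn] at h1
    simp only [rayVertex]
    rw [List.getElem_ofFn, h i h1, List.getD_eq_getElem u 0 (by omega)]

lemma memTree_take {t : Config} {u : List ℕ} (h : memTree t u) (k : ℕ) :
    memTree t (u.take k) := by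
  intro i hi
  have hi' : i < u.length := lt_of_lt_of_le hi (by simp)
  have := h i hi'
  simp only [List.get_eq_getElem] at this ⊢
  rw [List.getElem_take, List.take_take]
  simp only [List.length_take] at hi
  rwa [min_eq_left (by omega)]


open MeasureTheory Set in
section


lemma meas_build (F' F : Finset (List ℕ)) :
    MeasurableSet {ω : Config |
      F'.biUnion (fun v => (Finset.range (ω v)).image (fun j => v ++ [j])) = F} := by
  classical
  induction F' using Finset.induction_on generalizing F with
  | empty =>
    simp only [Finset.biUnion_empty]
    exact MeasurableSet.const _
  | @insert v F' hvF' ih =>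
    have : {ω : Config | (insert v F').biUnion
          (fun v => (Finset.range (ω v)).image (fun j => v ++ [j])) = F}
        = ⋃ (p : Finset (List ℕ) × Finset (List ℕ)) (_ : p.1 ∪ p.2 = F),
            ((fun ω : Config => ω v) ⁻¹'
              {m | (Finset.range m).image (fun j => v ++ [j]) = p.1}) ∩
            {ω : Config | F'.biUnion
              (fun v => (Finset.range (ω v)).image (fun j => v ++ [j])) = p.2} := by
      ext ω
      simp only [Finset.biUnion_insert, mem_setOf_eq, mem_iUnion, mem_inter_iff,
        mem_preimage]
      constructor
      · intro h
        exact ⟨⟨(Finset.range (ω v)).image (fun j => v ++ [j]),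
          F'.biUnion (fun v => (Finset.range (ω v)).image (fun j => v ++ [j]))⟩,
          h, rfl, rfl⟩
      · rintro ⟨p, hp, h1, h2⟩
        rw [h1, h2]; exact hp
    rw [this]
    exact MeasurableSet.iUnion fun p => MeasurableSet.iUnion fun _ =>
      ((measurable_pi_apply v) (MeasurableSet.of_discrete)).inter (ih _)

lemma meas_genFinset (n : ℕ) (F : Finset (List ℕ)) :
    MeasurableSet {ω : Config | genFinset ω n = F} := by
  induction n generalizing F with
  | zero =>
    have : {ω : Config | genFinset ω 0 = F} = {_ω : Config | ({[]} : Finset (List ℕ)) = F} := rfl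
    rw [this]
    exact MeasurableSet.const _
  | succ n ih =>
    have : {ω : Config | genFinset ω (n+1) = F}
        = ⋃ (F' : Finset (List ℕ)),
            ({ω : Config | genFinset ω n = F'} ∩
             {ω : Config | F'.biUnion
               (fun v => (Finset.range (ω v)).image (fun j => v ++ [j])) = F}) := by
      ext ω
      simp only [mem_setOf_eq, mem_iUnion, mem_inter_iff]
      constructor
      · intro h
        exact ⟨genFinset ω n, rfl, h⟩
      · rintro ⟨F', h1, h2⟩
        show (genFinset ω n).biUnion _ = F
        rw [h1]; exact h2
    rw [this]
    exact MeasurableSet.iUnion fun F' => (ih F').inter (meas_build F' F)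

lemma meas_Zcard (n : ℕ) : Measurable (fun ω : Config => (genFinset ω n).card) := by
  apply measurable_to_countable'
  intro j
  have : (fun ω : Config => (genFinset ω n).card) ⁻¹' {j}
      = ⋃ (F : Finset (List ℕ)) (_ : F.card = j), {ω : Config | genFinset ω n = F} := by
    ext ω
    simp only [mem_preimage, mem_singleton_iff, mem_iUnion, mem_setOf_eq]
    constructor
    · intro h; exact ⟨genFinset ω n, h, rfl⟩
    · rintro ⟨F, hF, h⟩; rw [h]; exact hF
  rw [this]
  exact MeasurableSet.iUnion fun F => MeasurableSet.iUnion fun _ => meas_genFinset n F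

variable {GW : Measure Config}

lemma pgf_eq_tsum [IsProbabilityMeasure GW] (n : ℕ) {x : ℝ} (hx0 : 0 ≤ x) (hx1 : x ≤ 1) :
    pgf GW n x = ∑' j : ℕ, (GW {ω : Config | (genFinset ω n).card = j}).toReal * x ^ j := by
  classical
  set A : ℕ → Set Config := fun j => {ω : Config | (genFinset ω n).card = j} with hA_def
  have hA : ∀ j, MeasurableSet (A j) := fun j => meas_Zcard n (measurableSet_singleton j)
  have hdisj : Pairwise (Function.onFun Disjoint A) := by
    intro i j hij
    simp only [Function.onFun, Set.disjoint_left]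
    rintro ω hi hj
    exact hij (hi.symm.trans hj)
  have hcover : (⋃ j, A j) = univ := by
    ext ω; simp only [mem_iUnion, mem_univ, iff_true]
    exact ⟨(genFinset ω n).card, rfl⟩
  have hmeas : Measurable (fun ω : Config => x ^ (genFinset ω n).card) :=
    (Measurable.of_discrete (f := fun j : ℕ => x ^ j)).comp (meas_Zcard n)
  have hint : Integrable (fun ω : Config => x ^ (genFinset ω n).card) GW := by
    refine (integrable_const (1 : ℝ)).mono' hmeas.aestronglyMeasurable ?_
    filter_upwards with ω
    rw [Real.norm_eq_abs, abs_pow, abs_of_nonneg hx0]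
    exact pow_le_one₀ hx0 hx1
  have h1 : pgf GW n x = ∫ ω, x ^ (genFinset ω n).card ∂GW := by
    simp only [pgf, Z_eq_card]
  rw [h1, ← setIntegral_univ, ← hcover,
    integral_iUnion hA hdisj (hint.integrableOn)]
  refine tsum_congr fun j => ?_
  rw [setIntegral_congr_fun (hA j) (g := fun _ => x ^ j) (fun ω hω => by rw [hω]),
    setIntegral_const, smul_eq_mul, Measure.real, hA_def]


end
section


variable {GW : Measure Config}

lemma toReal_le_one [IsProbabilityMeasure GW] (s : Set Config) : (GW s).toReal ≤ 1 := by
  have h1 : GW s ≤ 1 := prob_le_one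
  exact ENNReal.toReal_le_of_le_ofReal one_pos.le (by simpa using h1)

lemma summable_aux {b : ℝ} (hb0 : 0 ≤ b) (hb1 : b < 1) :
    Summable (fun j : ℕ => (j : ℝ) * b ^ (j - 1)) := by
  rw [← summable_nat_add_iff 1]
  have h1 : Summable (fun j : ℕ => (j : ℝ) * b ^ j) := by
    simpa using summable_pow_mul_geometric_of_norm_lt_one 1
      (r := b) (by rwa [Real.norm_eq_abs, abs_of_nonneg hb0])
  have h2 : Summable (fun j : ℕ => b ^ j) := summable_geometric_of_lt_one hb0 hb1
  have := h1.add h2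
  refine this.congr fun j => ?_
  rw [Nat.add_sub_cancel]
  push_cast
  ring

lemma hasDerivAt_pgf [IsProbabilityMeasure GW] (n : ℕ) {y : ℝ} (hy : y ∈ Set.Ioo (0:ℝ) 1) :
    HasDerivAt (pgf GW n)
      (∑' j : ℕ, (GW {ω : Config | (genFinset ω n).card = j}).toReal * ((j : ℝ) * y ^ (j - 1)))
      y := by
  obtain ⟨hy0, hy1⟩ := hy
  set a : ℕ → ℝ := fun j => (GW {ω : Config | (genFinset ω n).card = j}).toReal with ha_def
  have ha0 : ∀ j, 0 ≤ a j := fun j => ENNReal.toReal_nonneg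
  have ha1 : ∀ j, a j ≤ 1 := fun j => toReal_le_one _
  set b : ℝ := (y + 1) / 2 with hb_def
  have hyb : y < b := by rw [hb_def]; linarith
  have hb0 : 0 < b := by rw [hb_def]; linarith
  have hb1 : b < 1 := by rw [hb_def]; linarith
  have key : HasDerivAt (fun z => ∑' j : ℕ, a j * z ^ j)
      (∑' j : ℕ, a j * ((j : ℝ) * y ^ (j - 1))) y := by
    apply hasDerivAt_tsum_of_isPreconnected (u := fun j : ℕ => (j : ℝ) * b ^ (j - 1))
      (summable_aux hb0.le hb1) (isOpen_Ioo (a := -b) (b := b))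
      (convex_Ioo _ _).isPreconnected
      (g' := fun j z => a j * ((j : ℝ) * z ^ (j - 1)))
      (fun j z _ => (hasDerivAt_pow j z).const_mul (a j))
      ?_ (y₀ := 0) (by constructor <;> [linarith; linarith]) ?_
      ⟨by linarith, hyb⟩
    · intro j z hz
      rw [Real.norm_eq_abs, abs_mul, abs_mul, abs_of_nonneg (ha0 j), Nat.abs_cast, abs_pow]
      have h1 : |z| ≤ b := by
        rw [abs_le]; exact ⟨hz.1.le, hz.2.le⟩
      calc a j * ((j : ℝ) * |z| ^ (j - 1)) ≤ 1 * ((j : ℝ) * b ^ (j - 1)) := by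
            apply mul_le_mul (ha1 j) _ (by positivity) one_pos.le
            exact mul_le_mul_of_nonneg_left (pow_le_pow_left₀ (abs_nonneg z) h1 _) (Nat.cast_nonneg j)
        _ = (j : ℝ) * b ^ (j - 1) := one_mul _
    · apply summable_of_ne_finset_zero (s := {0})
      intro j hj
      simp only [Finset.mem_singleton] at hj
      simp [zero_pow hj]
  have heq : pgf GW n =ᶠ[nhds y] (fun z => ∑' j : ℕ, a j * z ^ j) := by
    filter_upwards [Ioo_mem_nhds hy0 hy1] with z hz
    exact pgf_eq_tsum n hz.1.le hz.2.le
  exact key.congr_of_eventuallyEq heq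

lemma deriv_pgf_eq [IsProbabilityMeasure GW] (n : ℕ) {y : ℝ} (hy : y ∈ Set.Ioo (0:ℝ) 1) :
    deriv (pgf GW n) y
      = ∑' j : ℕ, (GW {ω : Config | (genFinset ω n).card = j}).toReal * ((j : ℝ) * y ^ (j - 1)) :=
  (hasDerivAt_pgf n hy).deriv

lemma deriv_pgf_pos [IsProbabilityMeasure GW] (n : ℕ) {y : ℝ} (hy : y ∈ Set.Ioo (0:ℝ) 1)
    (φinv : ℕ → ℝ → ℝ) (hinj : ∀ z ∈ Set.Ioo (0:ℝ) 1, φinv n (pgf GW n z) = z) :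
    0 < deriv (pgf GW n) y := by
  set a : ℕ → ℝ := fun j => (GW {ω : Config | (genFinset ω n).card = j}).toReal with ha_def
  have ha0 : ∀ j, 0 ≤ a j := fun j => ENNReal.toReal_nonneg
  have ha1 : ∀ j, a j ≤ 1 := fun j => toReal_le_one _
  obtain ⟨hy0, hy1⟩ := hy
  -- there is a positive coefficient with index ≥ 1
  have hex : ∃ j, 1 ≤ j ∧ 0 < a j := by
    by_contra h
    push_neg at h
    have hzero : ∀ j, 1 ≤ j → a j = 0 := fun j hj => le_antisymm (h j hj) (ha0 j)
    have hconst : ∀ z ∈ Set.Ioo (0:ℝ) 1, pgf GW n z = a 0 := by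
      intro z hz
      rw [pgf_eq_tsum n hz.1.le hz.2.le]
      rw [tsum_eq_single 0 (fun j hj => by
        show a j * z ^ j = 0
        rw [hzero j (Nat.one_le_iff_ne_zero.mpr hj)]; ring)]
      show a 0 * z ^ 0 = a 0
      rw [pow_zero, mul_one]
    have h3 : (1/3 : ℝ) = (1/2 : ℝ) := by
      have e1 := hinj (1/3) (by norm_num)
      have e2 := hinj (1/2) (by norm_num)
      rw [hconst _ (by norm_num)] at e1
      rw [hconst _ (by norm_num)] at e2
      rw [e1] at e2
      exact e2
    norm_num at h3
  obtain ⟨j₀, hj₀1, hj₀pos⟩ := hex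
  rw [deriv_pgf_eq n ⟨hy0, hy1⟩]
  have hsum : Summable (fun j : ℕ => a j * ((j : ℝ) * y ^ (j - 1))) := by
    apply Summable.of_nonneg_of_le (fun j => by positivity)
      (fun j => ?_) (summable_aux hy0.le hy1)
    calc a j * ((j : ℝ) * y ^ (j - 1)) ≤ 1 * ((j : ℝ) * y ^ (j - 1)) :=
          mul_le_mul_of_nonneg_right (ha1 j) (by positivity)
      _ = (j : ℝ) * y ^ (j - 1) := one_mul _
  have hterm : 0 < a j₀ * ((j₀ : ℝ) * y ^ (j₀ - 1)) := by
    have : (0:ℝ) < j₀ := by exact_mod_cast hj₀1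
    positivity
  calc (0:ℝ) < a j₀ * ((j₀ : ℝ) * y ^ (j₀ - 1)) := hterm
    _ ≤ ∑' j, a j * ((j : ℝ) * y ^ (j - 1)) :=
        Summable.le_tsum hsum j₀ (fun j _ => by positivity)

lemma pgf_zero_eq [IsProbabilityMeasure GW] : pgf GW 0 = fun x => x := by
  funext x
  have h : ∀ ω : Config, x ^ (Z ω [] 0) = x := by
    intro ω
    rw [Z_eq_card]
    simp [genFinset]
  calc pgf GW 0 x = ∫ _ω, x ∂GW := integral_congr_ae (Filter.Eventually.of_forall h)
    _ = x := by simp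

lemma deriv_pgf_zero [IsProbabilityMeasure GW] (y : ℝ) : deriv (pgf GW 0) y = 1 := by
  rw [pgf_zero_eq]
  exact deriv_id y


end
section


lemma one_div_c {x ck : ℝ} (hx : x ∈ Set.Ioo (0:ℝ) 1) (h : ck = -1 / Real.log x) :
    1 / ck = -Real.log x := by
  have hL : Real.log x < 0 := Real.log_neg hx.1 hx.2
  rw [h]
  field_simp

lemma exp_inv_c {x ck : ℝ} (hx : x ∈ Set.Ioo (0:ℝ) 1) (h : ck = -1 / Real.log x) :
    Real.exp (1 / ck) = x⁻¹ := by
  rw [one_div_c hx h, Real.exp_neg, Real.exp_log hx.1]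

lemma exp_neg_nat_div_c {x ck : ℝ} (hx : x ∈ Set.Ioo (0:ℝ) 1) (h : ck = -1 / Real.log x)
    (ℓ : ℕ) : Real.exp (-(ℓ:ℝ) / ck) = x ^ ℓ := by
  have h1 : -(ℓ:ℝ) / ck = (ℓ:ℝ) * Real.log x := by
    have := one_div_c hx h
    have hck : ck ≠ 0 := by
      rw [h]
      have hL : Real.log x < 0 := Real.log_neg hx.1 hx.2
      rw [neg_div, div_eq_mul_inv, ne_eq, neg_eq_zero, one_mul, inv_eq_zero]
      exact hL.ne
    field_simp at this ⊢
    linear_combination (-(ℓ:ℝ)) * this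
  rw [h1, Real.exp_nat_mul, Real.exp_log hx.1]

lemma prod_ratio {f : ℕ → ℝ} (hf : ∀ k, f k ≠ 0) (n : ℕ) :
    ∏ k ∈ Finset.range n, f k / f (k + 1) = f 0 / f n := by
  induction n with
  | zero => simp [div_self (hf 0)]
  | succ n ih =>
    rw [Finset.prod_range_succ, ih]
    rw [div_mul_div_comm, mul_comm (f 0) (f n), ← div_mul_div_comm, div_self (hf n), one_mul]


end
end SpineAux

open SpineAux

/-- The fundamental identity of the spine decomposition: for every `n`, every tree `t` and
every vertex `u` of `t` at generation `n`,
`P(𝕋_n = T_n, ξ_n = u) = (∂M_n(T_n) / Z_n(T_n)) · GW(𝒯_n = T_n)`, where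
`∂M_n = e^{1/c_n} (Z_n / φ'_n(φ_n^{-1}(s))) φ_n^{-1}(s)^{Z_n}` is the derivative
martingale and `Z_n(T_n)` is the number of vertices of `T` at generation `n`. -/
theorem spine_marginal_eq_derivative_martingale
    (q : ℕ → ℝ) (hq_nonneg : ∀ ℓ, 0 ≤ q ℓ) (hq_zero : q 0 = 0) (hq_sum : ∑' ℓ, q ℓ = 1)
    (m : ℝ) (hm_def : m = ∑' ℓ : ℕ, (ℓ : ℝ) * q ℓ) (hm_one : 1 < m)
    (GW : Measure Config) (hGW : IsGW q GW)
    (s : ℝ) (hs : s ∈ Set.Ioo (0 : ℝ) 1)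
    (φinv : ℕ → ℝ → ℝ)
    (hφinv : ∀ n, ∀ x ∈ Set.Ioo (0 : ℝ) 1,
      φinv n x ∈ Set.Ioo (0 : ℝ) 1 ∧ pgf GW n (φinv n x) = x)
    (hφinv_left : ∀ n, ∀ y ∈ Set.Ioo (0 : ℝ) 1, φinv n (pgf GW n y) = y)
    (c : ℕ → ℝ) (hc : ∀ n, c n = -1 / Real.log (φinv n s))
    (P : Measure (Config × (ℕ → ℕ)))
    (hP : IsSpineLaw (tq q c) (tqs q c GW φinv s) P)
    (n : ℕ) (t : Config) (u : List ℕ) (hu_len : u.length = n) (hu_mem : memTree t u) :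
    P {p | (∀ v : List ℕ, v.length < n → memTree t v → p.1 v = t v) ∧
           rayVertex p.2 n = u}
      = ENNReal.ofReal
          ((Real.exp (1 / c n) * (Z t [] n : ℝ) / deriv (pgf GW n) (φinv n s)
              * (φinv n s) ^ (Z t [] n)) / (Z t [] n))
        * GW {ω | ∀ v : List ℕ, v.length < n → memTree t v → ω v = t v} := by
  classical
  obtain ⟨hGWprob, hGWprod⟩ := hGW
  haveI := hGWprob
  obtain ⟨hPprob, hPprod⟩ := hP
  -- basic notation facts
  have han : ∀ k, φinv k s ∈ Set.Ioo (0:ℝ) 1 := fun k => (hφinv k s hs).1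
  have hane : ∀ k, φinv k s ≠ 0 := fun k => (han k).1.ne'
  have hDpos : ∀ k, 0 < deriv (pgf GW k) (φinv k s) :=
    fun k => deriv_pgf_pos k (han k) φinv (hφinv_left k)
  have hD0 : deriv (pgf GW 0) (φinv 0 s) = 1 := deriv_pgf_zero _
  set u' : ℕ → ℕ := fun i => u.getD i 0 with hu'_def
  have hray : ∀ k, k ≤ n → rayVertex u' k = u.take k := fun k hk =>
    rayVertex_eq_take (by omega)
  have hu'lt : ∀ k < n, u' k < t (rayVertex u' k) := by
    intro k hk
    rw [hray k hk.le]
    have hk' : k < u.length := by omega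
    have h := hu_mem k hk'
    simp only [List.get_eq_getElem] at h
    have : u' k = u[k] := List.getD_eq_getElem u 0 hk'
    rw [this]
    exact h
  -- rewrite the event and apply the spine law
  have hev : {p : Config × (ℕ → ℕ) |
        (∀ v : List ℕ, v.length < n → memTree t v → p.1 v = t v) ∧ rayVertex p.2 n = u}
      = {p : Config × (ℕ → ℕ) |
        (∀ v : List ℕ, v.length < n → memTree t v → p.1 v = t v) ∧ ∀ k < n, p.2 k = u' k} := by
    ext p
    simp only [Set.mem_setOf_eq, and_congr_right_iff]
    intro _
    exact rayVertex_eq_iff hu_len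
  rw [hev, hPprod n t u' hu'lt]
  -- membership facts
  have huk : ∀ k, k ≤ n → u.take k ∈ genFinset t k := by
    intro k hk
    refine mem_genFinset.mpr ⟨?_, memTree_take hu_mem k⟩
    rw [List.length_take]; omega
  have hcard_pos : ∀ k, k ≤ n → 0 < (genFinset t k).card :=
    fun k hk => Finset.card_pos.mpr ⟨u.take k, huk k hk⟩
  -- the off-spine product as a Finset product
  have hfin : ∀ k, k < n → (∏ᶠ v ∈ (genSet t k \ {rayVertex u' k}), tq q c k (t v))
      = ∏ v ∈ (genFinset t k).erase (u.take k), tq q c k (t v) := by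
    intro k hk
    rw [hray k hk.le, genSet_eq,
      show ((genFinset t k : Set (List ℕ)) \ {u.take k})
        = ↑((genFinset t k).erase (u.take k)) from by rw [Finset.coe_erase],
      finprod_mem_coe_finset]
  -- the per-generation factor
  have hfac : ∀ k, k < n →
      tqs q c GW φinv s k (t (rayVertex u' k)) / (t (rayVertex u' k)) *
        ∏ v ∈ (genFinset t k).erase (u.take k), tq q c k (t v)
      = (deriv (pgf GW k) (φinv k s) / deriv (pgf GW (k+1)) (φinv (k+1) s)) *
          ((φinv (k+1) s ^ (genFinset t (k+1)).card / φinv (k+1) s) /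
           (φinv k s ^ (genFinset t k).card / φinv k s)) *
          ∏ v ∈ genFinset t k, q (t v) := by
    intro k hk
    have hw : u.take k ∈ genFinset t k := huk k hk.le
    have hℓeq : t (rayVertex u' k) = t (u.take k) := by rw [hray k hk.le]
    have hℓpos : 0 < t (u.take k) := by
      have := hu'lt k hk
      rw [hℓeq] at this
      omega
    have hℓne : ((t (u.take k) : ℝ)) ≠ 0 := Nat.cast_ne_zero.mpr hℓpos.ne'
    have htq : ∀ mm : ℕ, tq q c k mm = q mm * (φinv k s)⁻¹ * φinv (k+1) s ^ mm := by
      intro mm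
      rw [tq, exp_inv_c (han k) (hc k), exp_neg_nat_div_c (han (k+1)) (hc (k+1))]
    have hprod : ∏ v ∈ (genFinset t k).erase (u.take k), tq q c k (t v)
        = (∏ v ∈ (genFinset t k).erase (u.take k), q (t v)) *
            ((φinv k s)⁻¹) ^ ((genFinset t k).erase (u.take k)).card *
            φinv (k+1) s ^ (∑ v ∈ (genFinset t k).erase (u.take k), t v) := by
      rw [Finset.prod_congr rfl (fun v _ => htq (t v)), Finset.prod_mul_distrib,
        Finset.prod_mul_distrib, Finset.prod_const, Finset.prod_pow_eq_pow_sum]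
    have htqs : tqs q c GW φinv s k (t (u.take k)) / (t (u.take k))
        = q (t (u.take k)) * (φinv (k+1) s ^ (t (u.take k)) * (φinv (k+1) s)⁻¹) *
            (deriv (pgf GW k) (φinv k s) / deriv (pgf GW (k+1)) (φinv (k+1) s)) := by
      rw [tqs]
      have he : Real.exp (-((t (u.take k) : ℝ) - 1) / c (k+1))
          = φinv (k+1) s ^ (t (u.take k)) * (φinv (k+1) s)⁻¹ := by
        have harg : -((t (u.take k) : ℝ) - 1) / c (k+1)
            = -(t (u.take k) : ℝ)/c (k+1) + 1 / c (k+1) := by ring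
        rw [harg, Real.exp_add, exp_neg_nat_div_c (han (k+1)) (hc (k+1)),
          exp_inv_c (han (k+1)) (hc (k+1))]
      rw [he, div_eq_iff hℓne]
      ring
    obtain ⟨mm, hmm⟩ := Nat.exists_eq_succ_of_ne_zero (hcard_pos k hk.le).ne'
    rw [hℓeq, htqs, hprod, Finset.card_erase_of_mem hw, hmm, Nat.succ_sub_one,
      card_genFinset_succ t k, ← Finset.add_sum_erase _ _ hw,
      ← Finset.mul_prod_erase _ (fun v => q (t v)) hw]
    have hA := hane (k+1)
    have ha := hane k
    have hD1 := (hDpos (k+1)).ne'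
    rw [pow_add, pow_succ]
    field_simp
    rw [mul_assoc, ← mul_pow, one_div_mul_cancel ha, one_pow, mul_one]
  -- rewrite each factor of the product
  rw [Finset.prod_congr rfl (fun k hk => by
    rw [hfin k (Finset.mem_range.mp hk), hfac k (Finset.mem_range.mp hk)])]
  -- nonnegativity of factors
  have hfacnn : ∀ k, 0 ≤ (deriv (pgf GW k) (φinv k s) / deriv (pgf GW (k+1)) (φinv (k+1) s)) *
          ((φinv (k+1) s ^ (genFinset t (k+1)).card / φinv (k+1) s) /
           (φinv k s ^ (genFinset t k).card / φinv k s)) *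
          ∏ v ∈ genFinset t k, q (t v) := by
    intro k
    have h1 := hDpos k
    have h2 := hDpos (k+1)
    have h3 := (han k).1
    have h4 := (han (k+1)).1
    have h5 : 0 ≤ ∏ v ∈ genFinset t k, q (t v) :=
      Finset.prod_nonneg fun v _ => hq_nonneg (t v)
    positivity
  rw [← ENNReal.ofReal_prod_of_nonneg (fun k _ => hfacnn k)]
  -- compute the GW side
  have hdisj : (↑(Finset.range n) : Set ℕ).PairwiseDisjoint (genFinset t) := by
    intro i _ j _ hij
    simp only [Function.onFun, Finset.disjoint_left]
    intro v hvi hvj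
    exact hij ((mem_genFinset.mp hvi).1.symm.trans (mem_genFinset.mp hvj).1)
  have hS : {ω : Config | ∀ v : List ℕ, v.length < n → memTree t v → ω v = t v}
      = {ω : Config | ∀ v ∈ (Finset.range n).biUnion (genFinset t), ω v = t v} := by
    ext ω
    simp only [Set.mem_setOf_eq, Finset.mem_biUnion, Finset.mem_range]
    constructor
    · rintro h v ⟨k, hk, hv⟩
      obtain ⟨hl, hm'⟩ := mem_genFinset.mp hv
      exact h v (hl ▸ hk) hm'
    · intro h v hl hm'
      exact h v ⟨v.length, hl, mem_genFinset.mpr ⟨rfl, hm'⟩⟩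
  rw [hS, hGWprod, Finset.prod_biUnion hdisj]
  have hvQ : ∀ k, (∏ v ∈ genFinset t k, ENNReal.ofReal (q (t v)))
      = ENNReal.ofReal (∏ v ∈ genFinset t k, q (t v)) :=
    fun k => (ENNReal.ofReal_prod_of_nonneg (fun v _ => hq_nonneg (t v))).symm
  rw [Finset.prod_congr rfl (fun k _ => hvQ k),
    ← ENNReal.ofReal_prod_of_nonneg
      (fun k _ => Finset.prod_nonneg fun v _ => hq_nonneg (t v)),
    ← ENNReal.ofReal_mul (by
      have h1 := hDpos n
      have h2 := (han n).1
      have hZ : (0:ℝ) ≤ (Z t [] n : ℝ) := Nat.cast_nonneg _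
      have hZ2 : (0:ℝ) ≤ (φinv n s) ^ (Z t [] n) := by positivity
      positivity)]
  -- now a real-number identity
  congr 1
  rw [Finset.prod_mul_distrib, Finset.prod_mul_distrib]
  have hT1 : ∏ k ∈ Finset.range n,
      (deriv (pgf GW k) (φinv k s) / deriv (pgf GW (k+1)) (φinv (k+1) s))
      = 1 / deriv (pgf GW n) (φinv n s) := by
    rw [prod_ratio (fun k => (hDpos k).ne') n, hD0]
  have hT2 : ∏ k ∈ Finset.range n,
      ((φinv (k+1) s ^ (genFinset t (k+1)).card / φinv (k+1) s) /
       (φinv k s ^ (genFinset t k).card / φinv k s))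
      = (φinv n s ^ (genFinset t n).card / φinv n s) /
        (φinv 0 s ^ (genFinset t 0).card / φinv 0 s) := by
    have hg : ∀ k, (φinv k s ^ (genFinset t k).card / φinv k s) ≠ 0 := by
      intro k
      have := hane k
      positivity
    have := prod_ratio (f := fun k => (φinv k s ^ (genFinset t k).card / φinv k s)⁻¹)
      (fun k => inv_ne_zero (hg k)) n
    calc ∏ k ∈ Finset.range n,
        ((φinv (k+1) s ^ (genFinset t (k+1)).card / φinv (k+1) s) /
         (φinv k s ^ (genFinset t k).card / φinv k s))
        = ∏ k ∈ Finset.range n,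
          ((φinv k s ^ (genFinset t k).card / φinv k s)⁻¹ /
           (φinv (k+1) s ^ (genFinset t (k+1)).card / φinv (k+1) s)⁻¹) := by
          refine Finset.prod_congr rfl fun k _ => ?_
          rw [inv_div_inv]
      _ = (φinv 0 s ^ (genFinset t 0).card / φinv 0 s)⁻¹ /
          (φinv n s ^ (genFinset t n).card / φinv n s)⁻¹ := this
      _ = _ := by rw [inv_div_inv]
  rw [hT1, hT2]
  have hg0 : φinv 0 s ^ (genFinset t 0).card / φinv 0 s = 1 := by
    have h01 : (genFinset t 0).card = 1 := rfl
    rw [h01, pow_one, div_self (hane 0)]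
  rw [hg0, div_one, exp_inv_c (han n) (hc n), Z_eq_card]
  have hZn : ((genFinset t n).card : ℝ) ≠ 0 :=
    Nat.cast_ne_zero.mpr (hcard_pos n le_rfl).ne'
  have hDn := (hDpos n).ne'
  have han := hane n
  field_simp

end
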